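/- Let H be a real Hilbert space and T > 0. Let ψ : [0,T] × H → ℝ be continuous and assume that ψ maps bounded sets into bounded sets. Define C(t) := epi ψ(t,·) = {(u,λ) ∈ H × ℝ : ψ(t,u) ≤ λ} ⊆ H × ℝ. Then C satisfies the bounded selection-extension property (H₃) in H × ℝ: for every bounded map x : [0,T] → H × ℝ with x(t) ∈ C(t) for all t and every η > 0, there exists R > 0 such that for every compact K ⊆ [0,T] and every continuous y : K → H × ℝ with y(t) ∈ C(t) for all t ∈ K and sup_{t∈K}‖y(t) − x(t)‖ ≤ η, there is a continuous ȳ : [0,T] → H × ℝ with ȳ(t) ∈ C(t) for all t ∈ [0,T], ȳ = y on K, and sup_{t∈[0,T]}‖ȳ(t)‖ ≤ R. -/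

import Mathlib

set_option maxHeartbeats 1000000


open MeasureTheory Set Metric Filter Topology
open scoped RealInnerProductSpace ENNReal

/-- The proximal normal cone of `S` at `x`: `ζ ∈ N^P(S;x)` iff there are `σ ≥ 0`, `η > 0`
with `⟪ζ, y - x⟫ ≤ σ‖y - x‖²` for all `y ∈ S` with `‖y - x‖ < η`. -/
def ProxNormalCone {H : Type*} [NormedAddCommGroup H] [InnerProductSpace ℝ H]
    (S : Set H) (x : H) : Set H :=
  {ζ : H | ∃ σ : ℝ, 0 ≤ σ ∧ ∃ η : ℝ, 0 < η ∧
    ∀ y ∈ S, ‖y - x‖ < η → ⟪ζ, y - x⟫ ≤ σ * ‖y - x‖ ^ 2}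

/-- `ρ`-uniform prox-regularity, with `ρ ∈ (0,∞]` encoded in `ℝ≥0∞`.
For `ρ = ∞` one has `‖ζ‖ / (2 * ρ.toReal) = ‖ζ‖ / 0 = 0`, recovering the convex inequality. -/
def UniformlyProxRegular {H : Type*} [NormedAddCommGroup H] [InnerProductSpace ℝ H]
    (ρ : ℝ≥0∞) (S : Set H) : Prop :=
  ∀ x ∈ S, ∀ ζ ∈ ProxNormalCone S x, ∀ x' ∈ S,
    ⟪ζ, x' - x⟫ ≤ ‖ζ‖ / (2 * ρ.toReal) * ‖x' - x‖ ^ 2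

/-- Lower semicontinuity of a set-valued map on a set `A`: for every `a ∈ A` and open `U`
meeting `C a`, the set of points of `A` where `C` meets `U` is a neighborhood of `a` in `A`. -/
def LscOn {α β : Type*} [TopologicalSpace α] [TopologicalSpace β]
    (C : α → Set β) (A : Set α) : Prop :=
  ∀ a ∈ A, ∀ U : Set β, IsOpen U → (C a ∩ U).Nonempty →
    {a' | a' ∈ A ∧ (C a' ∩ U).Nonempty} ∈ nhdsWithin a A

/-- Admissible trajectory for a moving set `C` on `[0,T]`: right-continuous, of bounded
variation, with `x 0 ∈ C 0` and `x t ∈ C t` for all `t ∈ [0,T]`. -/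
def AdmissibleTrajectory {E : Type*} [NormedAddCommGroup E]
    (C : ℝ → Set E) (T : ℝ) (x : ℝ → E) : Prop :=
  (∀ t ∈ Icc (0:ℝ) T, ContinuousWithinAt x (Ici t) t) ∧
    BoundedVariationOn x (Icc (0:ℝ) T) ∧ x 0 ∈ C 0 ∧ ∀ t ∈ Icc (0:ℝ) T, x t ∈ C t

/-- The differential measure `dx` is absolutely continuous w.r.t. `ν` with density
`v ∈ L¹_ν`: `x t = x 0 + ∫_{(0,t]} v dν` for all `t ∈ [0,T]`. -/
def HasDensity {E : Type*} [NormedAddCommGroup E] [NormedSpace ℝ E]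
    (T : ℝ) (ν : Measure ℝ) (x v : ℝ → E) : Prop :=
  Integrable v ν ∧ ∀ t ∈ Icc (0:ℝ) T, x t = x 0 + ∫ s in Ioc (0:ℝ) t, v s ∂ν

/-- A (complete) positive Radon measure on `[0,T]`: a finite inner regular Borel measure
carried by `[0,T]`. -/
def IsRadonOn (ν : Measure ℝ) (T : ℝ) : Prop :=
  IsFiniteMeasure ν ∧ ν.InnerRegular ∧ ν ((Icc (0:ℝ) T)ᶜ) = 0

/-- The bounded selection-extension property (H₃). -/
def SelectionExtension {E : Type*} [NormedAddCommGroup E] (C : ℝ → Set E) (T : ℝ) : Prop :=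
  ∀ x : ℝ → E, (∃ M : ℝ, ∀ t ∈ Icc (0:ℝ) T, ‖x t‖ ≤ M) →
    (∀ t ∈ Icc (0:ℝ) T, x t ∈ C t) → ∀ η : ℝ, 0 < η →
    ∃ R : ℝ, 0 < R ∧
      ∀ K : Set ℝ, IsCompact K → K ⊆ Icc (0:ℝ) T →
        ∀ y : ℝ → E, ContinuousOn y K → (∀ t ∈ K, y t ∈ C t) →
          (∀ t ∈ K, ‖y t - x t‖ ≤ η) →
          ∃ ybar : ℝ → E, ContinuousOn ybar (Icc (0:ℝ) T) ∧
            (∀ t ∈ Icc (0:ℝ) T, ybar t ∈ C t) ∧ (∀ t ∈ K, ybar t = y t) ∧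
            ∀ t ∈ Icc (0:ℝ) T, ‖ybar t‖ ≤ R

/-- Hypothesis (H₁): each `C t` is nonempty, closed, connected and `ρ`-uniformly prox-regular. -/
def HypH1 {H : Type*} [NormedAddCommGroup H] [InnerProductSpace ℝ H]
    (ρ : ℝ≥0∞) (C : ℝ → Set H) (T : ℝ) : Prop :=
  ∀ t ∈ Icc (0:ℝ) T, (C t).Nonempty ∧ IsClosed (C t) ∧ IsConnected (C t) ∧
    UniformlyProxRegular ρ (C t)


section Ext
variable {E : Type*} [NormedAddCommGroup E] [NormedSpace ℝ E]

/-- Piecewise-linear extension of a continuous map from a compact subset of `ℝ`. -/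
lemma exists_continuous_extension_of_compact {K : Set ℝ} (hK : IsCompact K) (hne : K.Nonempty)
    {y : ℝ → E} (hy : ContinuousOn y K) :
    ∃ g : ℝ → E, Continuous g ∧ ∀ t ∈ K, g t = y t := by
  obtain ⟨a, haK, ha⟩ : ∃ a ∈ K, ∀ s ∈ K, a ≤ s :=
    ⟨sInf K, hK.sInf_mem hne, fun s hs => csInf_le hK.bddBelow hs⟩
  obtain ⟨b, hbK, hb⟩ : ∃ b ∈ K, ∀ s ∈ K, s ≤ b :=
    ⟨sSup K, hK.sSup_mem hne, fun s hs => le_csSup hK.bddAbove hs⟩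
  have hab : a ≤ b := hb a haK
  set c : ℝ → ℝ := fun t => max a (min t b) with hcdef
  have hc_mem : ∀ t, a ≤ c t ∧ c t ≤ b := fun t =>
    ⟨le_max_left _ _, max_le hab (min_le_right _ _)⟩
  have hc_lip : ∀ s t, |c s - c t| ≤ |s - t| := by
    intro s t
    have h1 : |max a (min s b) - max a (min t b)| ≤ max |a - a| |min s b - min t b| :=
      abs_max_sub_max_le_max _ _ _ _
    have h2 : |min s b - min t b| ≤ max |s - t| |b - b| := abs_min_sub_min_le_max _ _ _ _
    simp only [sub_self, abs_zero] at h1 h2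
    exact h1.trans (max_le (abs_nonneg _) (h2.trans (max_le le_rfl (abs_nonneg _))))
  have hc_fix : ∀ t, a ≤ t → t ≤ b → c t = t := by
    intro t h1 h2
    simp [hcdef, min_eq_left h2, max_eq_right h1]
  have hc_mono : Monotone c :=
    (monotone_const : Monotone fun _ : ℝ => a).max (monotone_id.min monotone_const)
  set p : ℝ → ℝ := fun t => sSup (K ∩ Iic (c t)) with hpdef
  set q : ℝ → ℝ := fun t => sInf (K ∩ Ici (c t)) with hqdef
  have hPne : ∀ t, (K ∩ Iic (c t)).Nonempty := fun t => ⟨a, haK, (hc_mem t).1⟩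
  have hQne : ∀ t, (K ∩ Ici (c t)).Nonempty := fun t => ⟨b, hbK, (hc_mem t).2⟩
  have hp_mem : ∀ t, p t ∈ K ∩ Iic (c t) := fun t =>
    (hK.inter_right isClosed_Iic).sSup_mem (hPne t)
  have hq_mem : ∀ t, q t ∈ K ∩ Ici (c t) := fun t =>
    (hK.inter_right isClosed_Ici).sInf_mem (hQne t)
  have hp_ge : ∀ t s, s ∈ K → s ≤ c t → s ≤ p t := fun t s hs hsc =>
    le_csSup (hK.inter_right isClosed_Iic).bddAbove ⟨hs, hsc⟩
  have hq_le : ∀ t s, s ∈ K → c t ≤ s → q t ≤ s := fun t s hs hsc =>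
    csInf_le (hK.inter_right isClosed_Ici).bddBelow ⟨hs, hsc⟩
  have hpq : ∀ t, p t ≤ q t := fun t => (hp_mem t).2.trans (hq_mem t).2
  have hpK : ∀ t ∈ K, p t = t := fun t ht =>
    le_antisymm ((hp_mem t).2.trans_eq (hc_fix t (ha t ht) (hb t ht)))
      (hp_ge t t ht (hc_fix t (ha t ht) (hb t ht)).ge)
  have hqK : ∀ t ∈ K, q t = t := fun t ht =>
    le_antisymm (hq_le t t ht (hc_fix t (ha t ht) (hb t ht)).le)
      ((hc_fix t (ha t ht) (hb t ht)).symm.trans_le (hq_mem t).2)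
  set θ : ℝ → ℝ := fun t => (c t - p t) / (q t - p t) with hθdef
  set g : ℝ → E := fun t => y (p t) + θ t • (y (q t) - y (p t)) with hgdef
  have hθ0 : ∀ t, 0 ≤ θ t := fun t =>
    div_nonneg (sub_nonneg.2 (hp_mem t).2) (sub_nonneg.2 (hpq t))
  have hθ1 : ∀ t, θ t ≤ 1 := fun t =>
    div_le_one_of_le₀ (sub_le_sub_right (hq_mem t).2 _) (sub_nonneg.2 (hpq t))
  have hgK : ∀ t ∈ K, g t = y t := by
    intro t ht
    simp [hgdef, hpK t ht, hqK t ht]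
  refine ⟨g, ?_, hgK⟩
  rw [continuous_iff_continuousAt]
  intro t₀
  by_cases ht₀ : t₀ ∈ K
  · -- continuity at points of K
    have hgt₀ : g t₀ = y t₀ := hgK t₀ ht₀
    rw [Metric.continuousAt_iff]
    intro ε hε
    obtain ⟨D, hD0, hD⟩ : ∃ D, 0 < D ∧ ∀ s ∈ K, ‖y s - y t₀‖ ≤ D := by
      obtain ⟨C, hC⟩ := hK.exists_bound_of_continuousOn hy
      refine ⟨2 * max C 0 + 1, by positivity, fun s hs => ?_⟩
      have h1 := hC s hs; have h2 := hC t₀ ht₀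
      have := norm_sub_le (y s) (y t₀)
      nlinarith [le_max_left C (0:ℝ), le_max_right C (0:ℝ)]
    obtain ⟨δ, hδ0, hδ⟩ : ∃ δ > 0, ∀ s ∈ K, |s - t₀| < δ → ‖y s - y t₀‖ < ε / 2 := by
      have h := hy t₀ ht₀
      rw [Metric.continuousWithinAt_iff] at h
      obtain ⟨δ, hδ0, h⟩ := h (ε / 2) (by linarith)
      exact ⟨δ, hδ0, fun s hs hd => by
        have := h hs (by rwa [Real.dist_eq]); rwa [dist_eq_norm] at this⟩
    set δ' : ℝ := min (δ / 2) (ε * δ / (8 * D)) with hδ'def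
    have hδ'0 : 0 < δ' := lt_min (by linarith) (by positivity)
    have hδ'1 : δ' ≤ δ / 2 := min_le_left _ _
    have hδ'2 : δ' ≤ ε * δ / (8 * D) := min_le_right _ _
    refine ⟨δ', hδ'0, fun {t} ht => ?_⟩
    rw [Real.dist_eq] at ht
    rw [dist_eq_norm, hgt₀]
    have hct : |c t - t₀| ≤ |t - t₀| := by
      have := hc_lip t t₀
      rwa [hc_fix t₀ (ha t₀ ht₀) (hb t₀ ht₀)] at this
    have hct' : |c t - t₀| < δ' := lt_of_le_of_lt hct ht
    have hdecomp : g t - y t₀ = (1 - θ t) • (y (p t) - y t₀) + θ t • (y (q t) - y t₀) := by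
      simp only [hgdef]; module
    have hbound : ‖g t - y t₀‖ ≤
        (1 - θ t) * ‖y (p t) - y t₀‖ + θ t * ‖y (q t) - y t₀‖ := by
      rw [hdecomp]
      refine (norm_add_le _ _).trans ?_
      rw [norm_smul, norm_smul, Real.norm_eq_abs, Real.norm_eq_abs,
        abs_of_nonneg (by linarith [hθ1 t]), abs_of_nonneg (hθ0 t)]
    rcases le_total t₀ t with hside | hside
    · -- t₀ ≤ t : p t is close to t₀
      have hcge : t₀ ≤ c t := by
        have := hc_mono hside
        rwa [hc_fix t₀ (ha t₀ ht₀) (hb t₀ ht₀)] at this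
      have hpt : t₀ ≤ p t := hp_ge t t₀ ht₀ hcge
      have hpc : |p t - t₀| < δ' := by
        rw [abs_of_nonneg (by linarith)]
        have h1 : p t ≤ c t := (hp_mem t).2
        have h2 : c t - t₀ < δ' := by
          have := (abs_le.1 hct'.le).2; linarith [abs_lt.1 hct']
        linarith
      have hyp : ‖y (p t) - y t₀‖ < ε / 2 :=
        hδ _ (hp_mem t).1 (lt_of_lt_of_le hpc (by linarith))
      by_cases hq : |q t - t₀| < δ
      · have hyq : ‖y (q t) - y t₀‖ < ε / 2 := hδ _ (hq_mem t).1 hq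
        have h1 : 0 ≤ 1 - θ t := by linarith [hθ1 t]
        have hA : (1 - θ t) * ‖y (p t) - y t₀‖ ≤ (1 - θ t) * (ε / 2) :=
          mul_le_mul_of_nonneg_left hyp.le h1
        have hB : θ t * ‖y (q t) - y t₀‖ ≤ θ t * (ε / 2) :=
          mul_le_mul_of_nonneg_left hyq.le (hθ0 t)
        nlinarith [hθ0 t, hθ1 t]
      · -- q t far : θ t is small
        have hqfar : t₀ + δ ≤ q t := by
          have h1 : c t ≤ q t := (hq_mem t).2
          have h2 : t₀ ≤ q t := hcge.trans h1
          rw [not_lt, abs_of_nonneg (by linarith)] at hq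
          linarith
        have hθsmall : θ t ≤ ε / (4 * D) := by
          have hnum : c t - p t < δ' := by
            have := abs_lt.1 hct'; linarith
          have hden : δ / 2 ≤ q t - p t := by linarith [abs_lt.1 hpc]
          have : θ t ≤ δ' / (δ / 2) := by
            apply div_le_div₀ (by positivity) (by linarith [hθ0 t, hnum])
              (by linarith) hden
          refine this.trans ?_
          rw [div_le_div_iff₀ (by linarith) (by positivity)]
          have h8 : (ε * δ / (8 * D)) * (4 * D) = ε * (δ / 2) := by field_simp; ring
          have h9 := mul_le_mul_of_nonneg_right hδ'2 (show (0:ℝ) ≤ 4 * D by positivity)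
          linarith
        have hyq : ‖y (q t) - y t₀‖ ≤ D := hD _ (hq_mem t).1
        have h1 : 0 ≤ 1 - θ t := by linarith [hθ1 t]
        have hA : (1 - θ t) * ‖y (p t) - y t₀‖ ≤ (1 - θ t) * (ε / 2) :=
          mul_le_mul_of_nonneg_left hyp.le h1
        have hB : θ t * ‖y (q t) - y t₀‖ ≤ (ε / (4 * D)) * D :=
          mul_le_mul hθsmall hyq (norm_nonneg _) (by positivity)
        have hC : (ε / (4 * D)) * D = ε / 4 := by field_simp
        have hE : (1 - θ t) * (ε / 2) ≤ ε / 2 := by nlinarith [mul_nonneg (hθ0 t) (show (0:ℝ) ≤ ε / 2 by linarith)]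
        linarith
    · -- t ≤ t₀ : q t is close to t₀
      have hcle : c t ≤ t₀ := by
        have := hc_mono hside
        rwa [hc_fix t₀ (ha t₀ ht₀) (hb t₀ ht₀)] at this
      have hqt : q t ≤ t₀ := hq_le t t₀ ht₀ hcle
      have hqc : |q t - t₀| < δ' := by
        rw [abs_of_nonpos (by linarith), neg_sub]
        have h1 : c t ≤ q t := (hq_mem t).2
        have h2 : t₀ - c t < δ' := by linarith [abs_lt.1 hct']
        linarith
      have hyq : ‖y (q t) - y t₀‖ < ε / 2 :=
        hδ _ (hq_mem t).1 (lt_of_lt_of_le hqc (by linarith))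
      by_cases hp : |p t - t₀| < δ
      · have hyp : ‖y (p t) - y t₀‖ < ε / 2 := hδ _ (hp_mem t).1 hp
        have h1 : 0 ≤ 1 - θ t := by linarith [hθ1 t]
        have hA : (1 - θ t) * ‖y (p t) - y t₀‖ ≤ (1 - θ t) * (ε / 2) :=
          mul_le_mul_of_nonneg_left hyp.le h1
        have hB : θ t * ‖y (q t) - y t₀‖ ≤ θ t * (ε / 2) :=
          mul_le_mul_of_nonneg_left hyq.le (hθ0 t)
        nlinarith [hθ0 t, hθ1 t]
      · have hpfar : p t ≤ t₀ - δ := by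
          have h1 : p t ≤ c t := (hp_mem t).2
          rw [not_lt, abs_of_nonpos (by linarith)] at hp
          linarith
        have hne' : q t - p t ≠ 0 := by
          have h := abs_lt.1 hqc
          have : 0 < q t - p t := by linarith
          exact ne_of_gt this
        have hθ' : 1 - θ t = (q t - c t) / (q t - p t) := by
          rw [eq_div_iff hne', hθdef]; dsimp only
          rw [sub_mul, div_mul_cancel₀ _ hne']; ring
        have hθsmall : 1 - θ t ≤ ε / (4 * D) := by
          rw [hθ']
          have hnum : q t - c t < δ' := by linarith [abs_lt.1 hqc, abs_lt.1 hct']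
          have hden : δ / 2 ≤ q t - p t := by linarith [abs_lt.1 hqc]
          have : (q t - c t) / (q t - p t) ≤ δ' / (δ / 2) := by
            apply div_le_div₀ (by positivity)
              (by linarith [sub_nonneg.2 (show c t ≤ q t from (hq_mem t).2)]) (by linarith) hden
          refine this.trans ?_
          rw [div_le_div_iff₀ (by linarith) (by positivity)]
          have h8 : (ε * δ / (8 * D)) * (4 * D) = ε * (δ / 2) := by field_simp; ring
          have h9 := mul_le_mul_of_nonneg_right hδ'2 (show (0:ℝ) ≤ 4 * D by positivity)
          linarith
        have hyp : ‖y (p t) - y t₀‖ ≤ D := hD _ (hp_mem t).1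
        have h1 : 0 ≤ 1 - θ t := by linarith [hθ1 t]
        have hA : θ t * ‖y (q t) - y t₀‖ ≤ θ t * (ε / 2) :=
          mul_le_mul_of_nonneg_left hyq.le (hθ0 t)
        have hA' : θ t * (ε / 2) ≤ ε / 2 := by nlinarith [mul_nonneg (show (0:ℝ) ≤ 1 - θ t by linarith [hθ1 t]) (show (0:ℝ) ≤ ε / 2 by linarith)]
        have hB : (1 - θ t) * ‖y (p t) - y t₀‖ ≤ (ε / (4 * D)) * D :=
          mul_le_mul hθsmall hyp (norm_nonneg _) (by positivity)
        have hC : (ε / (4 * D)) * D = ε / 4 := by field_simp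
        linarith
  · -- continuity off K
    rcases lt_or_ge t₀ a with hlt | hge
    · have heq : ∀ t ∈ Iio a, g t = y a := by
        intro t (hta : t < a)
        have hct : c t = a := by
          rw [hcdef]; dsimp only
          rw [min_eq_left (le_trans hta.le hab), max_eq_left hta.le]
        have hp : p t = a := le_antisymm ((hp_mem t).2.trans_eq hct)
          (hp_ge t a haK hct.ge)
        have hq : q t = a := le_antisymm (hq_le t a haK hct.le)
          (hct ▸ (hq_mem t).2)
        simp [hgdef, hp, hq]
      have : g =ᶠ[nhds t₀] fun _ => y a :=
        Filter.eventually_of_mem (Iio_mem_nhds hlt) heq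
      exact (continuousAt_const.congr this.symm)
    rcases lt_or_ge b t₀ with hlt' | hle'
    · have heq : ∀ t ∈ Ioi b, g t = y b := by
        intro t (htb : b < t)
        have hct : c t = b := by
          rw [hcdef]; dsimp only
          rw [min_eq_right htb.le, max_eq_right hab]
        have hp : p t = b := le_antisymm ((hp_mem t).2.trans_eq hct)
          (hp_ge t b hbK hct.ge)
        have hq : q t = b := le_antisymm (hq_le t b hbK hct.le)
          (hct ▸ (hq_mem t).2)
        simp [hgdef, hp, hq]
      have : g =ᶠ[nhds t₀] fun _ => y b :=
        Filter.eventually_of_mem (Ioi_mem_nhds hlt') heq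
      exact (continuousAt_const.congr this.symm)
    · -- a ≤ t₀ ≤ b, t₀ ∉ K
      have hct₀ : c t₀ = t₀ := hc_fix t₀ hge hle'
      set α := p t₀ with hα
      set β := q t₀ with hβ
      have hαK : α ∈ K := (hp_mem t₀).1
      have hβK : β ∈ K := (hq_mem t₀).1
      have hαlt : α < t₀ := lt_of_le_of_ne ((hp_mem t₀).2.trans_eq hct₀)
        (fun h => ht₀ (h ▸ hαK))
      have hβgt : t₀ < β := lt_of_le_of_ne (hct₀ ▸ (hq_mem t₀).2)
        (fun h => ht₀ (h ▸ hβK))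
      have hgap : ∀ s ∈ K, s ≤ α ∨ β ≤ s := by
        intro s hs
        rcases le_total s t₀ with h | h
        · exact Or.inl (hp_ge t₀ s hs (hct₀.symm ▸ h))
        · exact Or.inr (hq_le t₀ s hs (hct₀.symm ▸ h))
      have heq : ∀ t ∈ Ioo α β, g t = y α + ((t - α) / (β - α)) • (y β - y α) := by
        intro t ⟨h1, h2⟩
        have hct : c t = t := hc_fix t ((ha α hαK).trans h1.le) (h2.le.trans (hb β hβK))
        have hp : p t = α := by
          refine le_antisymm ?_ (hp_ge t α hαK (by rw [hct]; exact h1.le))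
          rcases hgap (p t) (hp_mem t).1 with h | h
          · exact h
          · exact absurd ((hp_mem t).2.trans_eq hct) (not_le.2 (lt_of_lt_of_le h2 h))
        have hq : q t = β := by
          refine le_antisymm (hq_le t β hβK (by rw [hct]; exact h2.le)) ?_
          rcases hgap (q t) (hq_mem t).1 with h | h
          · have h' := (hq_mem t).2
            rw [hct] at h'
            exact absurd h' (not_le.2 (lt_of_le_of_lt h h1))
          · exact h
        simp [hgdef, hθdef, hp, hq, hct]
      have hcont : Continuous fun t : ℝ => y α + ((t - α) / (β - α)) • (y β - y α) := by
        exact continuous_const.add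
          (((continuous_id.sub continuous_const).div_const _).smul continuous_const)
      have hev : g =ᶠ[nhds t₀] fun t => y α + ((t - α) / (β - α)) • (y β - y α) :=
        Filter.eventually_of_mem (Ioo_mem_nhds hαlt hβgt) heq
      exact hcont.continuousAt.congr hev.symm

end Ext

section L2Helpers
variable {H : Type*} [NormedAddCommGroup H] [InnerProductSpace ℝ H]

lemma l2_component_norm_le (p : WithLp 2 (H × ℝ)) : ‖p.fst‖ ≤ ‖p‖ ∧ ‖p.snd‖ ≤ ‖p‖ := by
  have h := WithLp.prod_norm_sq_eq_of_L2 p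
  constructor
  · nlinarith [norm_nonneg p, norm_nonneg p.fst, norm_nonneg p.snd]
  · nlinarith [norm_nonneg p, norm_nonneg p.fst, norm_nonneg p.snd]

lemma l2_norm_le_add (p : WithLp 2 (H × ℝ)) : ‖p‖ ≤ ‖p.fst‖ + ‖p.snd‖ := by
  have h := WithLp.prod_norm_sq_eq_of_L2 p
  nlinarith [norm_nonneg p, norm_nonneg p.fst, norm_nonneg p.snd,
    mul_nonneg (norm_nonneg p.fst) (norm_nonneg p.snd)]

end L2Helpers

/-- For a continuous `ψ : [0,T] × H → ℝ` mapping bounded sets into bounded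
sets, the epigraph family `C t = epi ψ(t,·) ⊆ H × ℝ` (with the product Hilbert structure,
i.e. the `ℓ²` product `WithLp 2 (H × ℝ)`) satisfies the bounded selection-extension
property (H₃). -/
theorem selectionExtension_of_epigraph
    {H : Type*} [NormedAddCommGroup H] [InnerProductSpace ℝ H] [CompleteSpace H]
    (T : ℝ) (hT : 0 < T) (ψ : ℝ → H → ℝ)
    (hψcont : ContinuousOn (fun q : ℝ × H => ψ q.1 q.2) (Icc (0:ℝ) T ×ˢ (univ : Set H)))
    (hψbd : ∀ M : ℝ, ∃ M' : ℝ, ∀ t ∈ Icc (0:ℝ) T, ∀ u : H, ‖u‖ ≤ M → |ψ t u| ≤ M') :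
    SelectionExtension
      (fun t => {p : WithLp 2 (H × ℝ) |
        ψ t (WithLp.equiv 2 (H × ℝ) p).1 ≤ (WithLp.equiv 2 (H × ℝ) p).2}) T := by
  intro x hxbd hxC η hη
  obtain ⟨M, hM⟩ := hxbd
  have hM0 : 0 ≤ M := le_trans (norm_nonneg _) (hM 0 ⟨le_refl 0, hT.le⟩)
  set c₀ : ℝ := M + η with hc₀def
  have hc₀ : 0 < c₀ := by positivity
  obtain ⟨M', hM'⟩ := hψbd c₀
  have hM'abs : ∀ t ∈ Icc (0:ℝ) T, ∀ u : H, ‖u‖ ≤ c₀ → |ψ t u| ≤ |M'| :=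
    fun t ht u hu => (hM' t ht u hu).trans (le_abs_self M')
  refine ⟨2 * c₀ + |M'| + 1, by positivity, ?_⟩
  intro K hKcomp hKsub y hycont hyC hyx
  rcases K.eq_empty_or_nonempty with hKe | hKne
  · subst hKe
    refine ⟨fun _ => (WithLp.equiv 2 (H × ℝ)).symm (0, c₀ + |M'|),
      continuousOn_const, ?_, fun t ht => absurd ht (notMem_empty t), ?_⟩
    · intro t ht
      simp only [Set.mem_setOf_eq, Equiv.apply_symm_apply]
      have h1 := hM'abs t ht 0 (by simp [hc₀.le])
      have h2 := le_abs_self (ψ t 0)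
      linarith
    · intro t ht
      dsimp only
      refine (l2_norm_le_add _).trans ?_
      rw [WithLp.equiv_symm_apply, WithLp.toLp_fst, WithLp.toLp_snd, norm_zero, Real.norm_eq_abs,
        abs_of_nonneg (by positivity)]
      show (0:ℝ) + (c₀ + |M'|) ≤ 2 * c₀ + |M'| + 1
      linarith
  · have hyc : ∀ t ∈ K, ‖y t‖ ≤ c₀ := by
      intro t ht
      calc ‖y t‖ = ‖y t - x t + x t‖ := by rw [sub_add_cancel]
        _ ≤ ‖y t - x t‖ + ‖x t‖ := norm_add_le _ _
        _ ≤ η + M := add_le_add (hyx t ht) (hM t (hKsub ht))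
        _ = c₀ := by rw [hc₀def]; ring
    obtain ⟨g, hgcont, hgeq⟩ := exists_continuous_extension_of_compact hKcomp hKne hycont
    set r : WithLp 2 (H × ℝ) → WithLp 2 (H × ℝ) := fun p => (c₀ / max c₀ ‖p‖) • p with hrdef
    have hmaxpos : ∀ p : WithLp 2 (H × ℝ), 0 < max c₀ ‖p‖ :=
      fun p => lt_of_lt_of_le hc₀ (le_max_left _ _)
    have hrcont : Continuous r :=
      (continuous_const.div (continuous_const.max continuous_norm)
        (fun p => ne_of_gt (hmaxpos p))).smul continuous_id
    have hrnorm : ∀ p, ‖r p‖ ≤ c₀ := by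
      intro p
      rw [hrdef]
      dsimp only
      rw [norm_smul, Real.norm_eq_abs,
        abs_of_nonneg (div_nonneg hc₀.le (hmaxpos p).le),
        div_mul_eq_mul_div, div_le_iff₀ (hmaxpos p)]
      exact mul_le_mul_of_nonneg_left (le_max_right _ _) hc₀.le
    have hrfix : ∀ p, ‖p‖ ≤ c₀ → r p = p := by
      intro p hp
      rw [hrdef]
      dsimp only
      rw [max_eq_left hp, div_self (ne_of_gt hc₀), one_smul]
    set u : ℝ → H := fun t => (WithLp.equiv 2 (H × ℝ) (r (g t))).1 with hudef
    set μ : ℝ → ℝ := fun t => (WithLp.equiv 2 (H × ℝ) (r (g t))).2 with hμdef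
    have hequiv : Continuous (WithLp.equiv 2 (H × ℝ)) := WithLp.prod_continuous_ofLp 2 H ℝ
    have hucont : Continuous u := continuous_fst.comp (hequiv.comp (hrcont.comp hgcont))
    have hμcont : Continuous μ := continuous_snd.comp (hequiv.comp (hrcont.comp hgcont))
    have hubd : ∀ t, ‖u t‖ ≤ c₀ := by
      intro t
      rw [hudef]
      dsimp only
      change ‖(r (g t)).fst‖ ≤ c₀
      exact (l2_component_norm_le (r (g t))).1.trans (hrnorm _)
    have hμbd : ∀ t, ‖μ t‖ ≤ c₀ := by
      intro t
      rw [hμdef]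
      dsimp only
      change ‖(r (g t)).snd‖ ≤ c₀
      exact (l2_component_norm_le (r (g t))).2.trans (hrnorm _)
    have hψucont : ContinuousOn (fun t => ψ t (u t)) (Icc (0:ℝ) T) := by
      have hpair : ContinuousOn (fun t : ℝ => ((t, u t) : ℝ × H)) (Icc (0:ℝ) T) :=
        (continuous_id.prodMk hucont).continuousOn
      exact hψcont.comp hpair (fun t ht => ⟨ht, mem_univ _⟩)
    refine ⟨fun t => (WithLp.equiv 2 (H × ℝ)).symm (u t, max (μ t) (ψ t (u t))), ?_, ?_, ?_, ?_⟩
    · exact (WithLp.prod_continuous_toLp 2 H ℝ).comp_continuousOn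
        (hucont.continuousOn.prodMk (hμcont.continuousOn.sup hψucont))
    · intro t ht
      simp only [Set.mem_setOf_eq, Equiv.apply_symm_apply]
      exact le_max_right _ _
    · intro t ht
      dsimp only
      have hrg : r (g t) = y t := by rw [hgeq t ht]; exact hrfix _ (hyc t ht)
      have hu' : u t = (WithLp.equiv 2 (H × ℝ) (y t)).1 := by
        rw [hudef]; dsimp only; rw [hrg]
      have hμ' : μ t = (WithLp.equiv 2 (H × ℝ) (y t)).2 := by
        rw [hμdef]; dsimp only; rw [hrg]
      have hmax : max (μ t) (ψ t (u t)) = μ t := by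
        apply max_eq_left
        rw [hu', hμ']
        exact hyC t ht
      rw [hmax, hu', hμ', Prod.mk.eta, Equiv.symm_apply_apply]
    · intro t ht
      dsimp only
      refine (l2_norm_le_add _).trans ?_
      rw [WithLp.equiv_symm_apply, WithLp.toLp_fst, WithLp.toLp_snd, Real.norm_eq_abs]
      have h1 : |max (μ t) (ψ t (u t))| ≤ max |μ t| |ψ t (u t)| := abs_max_le_max_abs_abs
      have h2 : |μ t| ≤ c₀ := by rw [← Real.norm_eq_abs]; exact hμbd t
      have h3 : |ψ t (u t)| ≤ |M'| := hM'abs t ht (u t) (hubd t)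
      have h4 : max |μ t| |ψ t (u t)| ≤ c₀ + |M'| := max_le (by linarith [abs_nonneg M'])
        (by linarith)
      linarith [hubd t]
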